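/- If f is analytic on the unit disk with Re f(z) < 1 and a_0 = f(0) \in [0,1), then a_0^2 + \sum_{n=1}^\infty |a_n| r^n \le 1 for all r \le (1+a_0)/(3+a_0). -/

import Mathlib

open Metric MeasureTheory Complex Filter
open scoped Real

private lemma exp_circle_int (j : ℤ) :
    ∫ θ in Set.Ioc (0:ℝ) (2*π), Complex.exp ((j:ℂ) * Complex.I * θ) =
      if j = 0 then (2*π : ℂ) else 0 := by
  have h2π : (0:ℝ) ≤ 2*π := by positivity
  rw [← intervalIntegral.integral_of_le h2π]
  split_ifs with h
  · subst h
    simp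
  · have hc : (j:ℂ) * Complex.I ≠ 0 :=
      mul_ne_zero (by exact_mod_cast h) Complex.I_ne_zero
    rw [integral_exp_mul_complex hc]
    have h1 : Complex.exp ((j:ℂ) * Complex.I * ((2*π:ℝ):ℂ)) = 1 := by
      rw [show ((j:ℂ) * Complex.I * ((2*π:ℝ):ℂ)) = (j:ℂ) * (2*π*Complex.I) by push_cast; ring]
      exact Complex.exp_int_mul_two_pi_mul_I j
    rw [h1]
    simp

private lemma memball (ρ : ℝ) (h0ρ : 0 ≤ ρ) (hρ : ρ < 1) (θ : ℝ) :
    (ρ:ℂ) * Complex.exp (Complex.I * θ) ∈ ball (0:ℂ) 1 := by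
  simp only [mem_ball, dist_zero_right, norm_mul, Complex.norm_real,
    Complex.norm_exp]
  simpa [_root_.abs_of_nonneg h0ρ] using hρ

private lemma key_hasSum (f : ℂ → ℂ) (a : ℕ → ℂ)
    (hsum : ∀ z ∈ ball (0 : ℂ) 1, HasSum (fun n => a n * z ^ n) (f z))
    (ρ : ℝ) (h0ρ : 0 ≤ ρ) (hρ : ρ < 1) (k : ℤ) :
    HasSum (fun m : ℕ => if (m:ℤ) + k = 0 then (2*π:ℂ) * (a m * (ρ:ℂ)^m) else 0)
      (∫ θ in Set.Ioc (0:ℝ) (2*π),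
        f ((ρ:ℂ) * Complex.exp (Complex.I * θ)) * Complex.exp ((k:ℂ) * Complex.I * θ)) := by
  set μ := volume.restrict (Set.Ioc (0:ℝ) (2*π)) with hμ
  have habs : Summable (fun m : ℕ => ‖a m‖ * ρ^m) := by
    have hz : (ρ:ℂ) ∈ ball (0:ℂ) 1 := by
      simpa [mem_ball, _root_.abs_of_nonneg h0ρ] using hρ
    have := ((hsum _ hz).summable)
    have hn := summable_norm_iff.mpr this
    refine hn.congr fun m => ?_
    simp [_root_.abs_of_nonneg h0ρ]
  set F : ℕ → ℝ → ℂ := fun m θ => a m * (ρ:ℂ)^m * Complex.exp (((m:ℂ) + (k:ℂ)) * Complex.I * θ)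
    with hF
  have hFcont : ∀ m, Continuous (F m) := by
    intro m; fun_prop
  have hFnorm : ∀ m θ, ‖F m θ‖ = ‖a m‖ * ρ^m := by
    intro m θ
    simp [hF, Complex.norm_exp, _root_.abs_of_nonneg h0ρ]
  have hFint : ∀ m, Integrable (F m) μ := fun m => (hFcont m).integrableOn_Ioc
  have hFsum : Summable fun m => ∫ θ, ‖F m θ‖ ∂μ := by
    have : (fun m => ∫ θ, ‖F m θ‖ ∂μ) = fun m => (‖a m‖ * ρ^m) * (2*π) := by
      funext m
      simp only [hFnorm]
      rw [setIntegral_const, Measure.real, Real.volume_Ioc]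
      rw [ENNReal.toReal_ofReal (by nlinarith [Real.pi_pos] : (0:ℝ) ≤ 2*π - 0), smul_eq_mul]
      ring
    rw [this]
    exact habs.mul_right _
  have hmain := MeasureTheory.hasSum_integral_of_summable_integral_norm hFint hFsum
  have htsum : ∀ θ : ℝ, (∑' m, F m θ) =
      f ((ρ:ℂ) * Complex.exp (Complex.I * θ)) * Complex.exp ((k:ℂ) * Complex.I * θ) := by
    intro θ
    have hz := memball ρ h0ρ hρ θ
    have hs := (hsum _ hz).mul_right (Complex.exp ((k:ℂ) * Complex.I * θ))
    have : ∀ m : ℕ, a m * ((ρ:ℂ) * Complex.exp (Complex.I * θ))^m *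
        Complex.exp ((k:ℂ) * Complex.I * θ) = F m θ := by
      intro m
      simp only [hF]
      rw [mul_pow, ← Complex.exp_nat_mul,
        show ((m:ℂ)+(k:ℂ)) * Complex.I * (θ:ℂ) = (m:ℂ)*(Complex.I*(θ:ℂ)) + (k:ℂ)*Complex.I*(θ:ℂ)
          by ring, Complex.exp_add]
      ring
    have hs' : HasSum (fun m => F m θ)
        (f ((ρ:ℂ) * Complex.exp (Complex.I * θ)) * Complex.exp ((k:ℂ) * Complex.I * θ)) :=
      (funext this : _) ▸ hs
    exact hs'.tsum_eq
  have hterm : ∀ m : ℕ, (∫ θ, F m θ ∂μ) =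
      if (m:ℤ) + k = 0 then (2*π:ℂ) * (a m * (ρ:ℂ)^m) else 0 := by
    intro m
    have he := exp_circle_int ((m:ℤ) + k)
    push_cast at he
    simp only [hF]
    rw [MeasureTheory.integral_const_mul, hμ, he]
    split_ifs with h
    · ring
    · ring
  simp_rw [htsum] at hmain
  exact (funext hterm : _) ▸ hmain


private lemma coeff_int (f : ℂ → ℂ) (a : ℕ → ℂ)
    (hsum : ∀ z ∈ ball (0 : ℂ) 1, HasSum (fun n => a n * z ^ n) (f z))
    (ρ : ℝ) (h0ρ : 0 ≤ ρ) (hρ : ρ < 1) (n : ℕ) :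
    (∫ θ in Set.Ioc (0:ℝ) (2*π),
        f ((ρ:ℂ) * Complex.exp (Complex.I * θ)) * Complex.exp (-(n:ℂ) * Complex.I * θ))
      = (2*π:ℂ) * (a n * (ρ:ℂ)^n) := by
  have h1 := key_hasSum f a hsum ρ h0ρ hρ (-(n:ℤ))
  simp_rw [Int.cast_neg, Int.cast_natCast] at h1
  have h2 : (fun m : ℕ => if (m:ℤ) + -(n:ℤ) = 0 then (2*π:ℂ)*(a m*(ρ:ℂ)^m) else 0)
      = fun m => if m = n then (2*π:ℂ)*(a n*(ρ:ℂ)^n) else 0 := by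
    funext m
    by_cases h : m = n
    · subst h; simp
    · have h' : ¬((m:ℤ) + -(n:ℤ) = 0) := by omega
      simp [h, h']
  rw [h2] at h1
  exact h1.unique (hasSum_ite_eq n _)

private lemma coeff_zero_int (f : ℂ → ℂ) (a : ℕ → ℂ)
    (hsum : ∀ z ∈ ball (0 : ℂ) 1, HasSum (fun n => a n * z ^ n) (f z))
    (ρ : ℝ) (h0ρ : 0 ≤ ρ) (hρ : ρ < 1) (n : ℕ) (hn : 1 ≤ n) :
    (∫ θ in Set.Ioc (0:ℝ) (2*π),
        f ((ρ:ℂ) * Complex.exp (Complex.I * θ)) * Complex.exp ((n:ℂ) * Complex.I * θ)) = 0 := by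
  have h1 := key_hasSum f a hsum ρ h0ρ hρ (n:ℤ)
  simp_rw [Int.cast_natCast] at h1
  have h2 : (fun m : ℕ => if (m:ℤ) + (n:ℤ) = 0 then (2*π:ℂ)*(a m*(ρ:ℂ)^m) else 0)
      = fun _ => (0:ℂ) := by
    funext m
    have h' : ¬((m:ℤ) + (n:ℤ) = 0) := by omega
    simp [h']
  rw [h2] at h1
  exact h1.unique hasSum_zero

private lemma g_cont (f : ℂ → ℂ) (a : ℕ → ℂ)
    (hsum : ∀ z ∈ ball (0 : ℂ) 1, HasSum (fun n => a n * z ^ n) (f z))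
    (ρ : ℝ) (h0ρ : 0 ≤ ρ) (hρ : ρ < 1) :
    Continuous (fun θ : ℝ => f ((ρ:ℂ) * Complex.exp (Complex.I * θ))) := by
  have habs : Summable (fun m : ℕ => ‖a m‖ * ρ^m) := by
    have hz : (ρ:ℂ) ∈ ball (0:ℂ) 1 := by
      simpa [mem_ball, _root_.abs_of_nonneg h0ρ] using hρ
    have hn := summable_norm_iff.mpr ((hsum _ hz).summable)
    refine hn.congr fun m => ?_
    simp [_root_.abs_of_nonneg h0ρ]
  have heq : (fun θ : ℝ => f ((ρ:ℂ) * Complex.exp (Complex.I * θ)))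
      = fun θ : ℝ => ∑' m, a m * ((ρ:ℂ) * Complex.exp (Complex.I * (θ:ℂ)))^m := by
    funext θ
    exact ((hsum _ (memball ρ h0ρ hρ θ)).tsum_eq).symm
  rw [heq]
  refine continuous_tsum (fun m => by fun_prop) habs (fun m θ => le_of_eq ?_)
  simp [mul_pow, Complex.norm_exp, _root_.abs_of_nonneg h0ρ]

private lemma coeff_rho (f : ℂ → ℂ) (a : ℕ → ℂ) (a₀ : ℝ)
    (hsum : ∀ z ∈ ball (0 : ℂ) 1, HasSum (fun n => a n * z ^ n) (f z))
    (hre : ∀ z ∈ ball (0 : ℂ) 1, (f z).re < 1)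
    (ha0 : a 0 = (a₀ : ℂ))
    (ρ : ℝ) (h0ρ : 0 ≤ ρ) (hρ : ρ < 1) (n : ℕ) (hn : 1 ≤ n) :
    ‖a n‖ * ρ^n ≤ 2*(1-a₀) := by
  set g : ℝ → ℂ := fun θ => f ((ρ:ℂ) * Complex.exp (Complex.I * θ)) with hg
  have hgc : Continuous g := g_cont f a hsum ρ h0ρ hρ
  have hgint : Integrable g (volume.restrict (Set.Ioc (0:ℝ) (2*π))) := hgc.integrableOn_Ioc
  have hgre : ∀ θ : ℝ, (g θ).re < 1 := fun θ => hre _ (memball ρ h0ρ hρ θ)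
  have I1 := coeff_int f a hsum ρ h0ρ hρ n
  have I2 := coeff_zero_int f a hsum ρ h0ρ hρ n hn
  have I2' : (∫ θ in Set.Ioc (0:ℝ) (2*π),
      (starRingEnd ℂ) (g θ) * Complex.exp (-(n:ℂ) * Complex.I * θ)) = 0 := by
    have hc : ∀ θ : ℝ, (starRingEnd ℂ) (g θ) * Complex.exp (-(n:ℂ) * Complex.I * θ)
        = (starRingEnd ℂ) (g θ * Complex.exp ((n:ℂ) * Complex.I * θ)) := by
      intro θ
      rw [map_mul]
      congr 1
      rw [← Complex.exp_conj]
      congr 1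
      simp [Complex.conj_I]
    simp_rw [hc]
    rw [integral_conj, I2, map_zero]
  have I3 : (∫ θ in Set.Ioc (0:ℝ) (2*π), Complex.exp (-(n:ℂ) * Complex.I * θ)) = 0 := by
    have h := exp_circle_int (-(n:ℤ))
    have h' : ¬(-(n:ℤ) = 0) := by omega
    rw [if_neg h'] at h
    rw [← h]
    congr 1
    funext θ
    congr 1
    push_cast
    ring
  have key : (∫ θ in Set.Ioc (0:ℝ) (2*π),
      (((g θ).re : ℂ) - 1) * Complex.exp (-(n:ℂ) * Complex.I * θ))
      = (π:ℂ) * (a n * (ρ:ℂ)^n) := by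
    have hsplit : ∀ θ : ℝ, (((g θ).re : ℂ) - 1) * Complex.exp (-(n:ℂ) * Complex.I * θ)
        = (g θ * Complex.exp (-(n:ℂ) * Complex.I * θ)
           + (starRingEnd ℂ) (g θ) * Complex.exp (-(n:ℂ) * Complex.I * θ))/2
          - Complex.exp (-(n:ℂ) * Complex.I * θ) := by
      intro θ
      have hu : ((g θ).re : ℂ) = (g θ + (starRingEnd ℂ) (g θ))/2 := by
        rw [Complex.add_conj]; push_cast; ring
      rw [hu]; ring
    simp_rw [hsplit]
    rw [integral_sub, integral_div, integral_add, I1, I2', I3]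
    · ring
    · exact (hgc.mul (by fun_prop)).integrableOn_Ioc
    · exact ((Complex.continuous_conj.comp hgc).mul (by fun_prop)).integrableOn_Ioc
    · exact (((hgc.mul (by fun_prop)).add
        ((Complex.continuous_conj.comp hgc).mul (by fun_prop))).div_const 2).integrableOn_Ioc
    · exact (by fun_prop : Continuous fun θ : ℝ => Complex.exp (-(n:ℂ) * Complex.I * θ)).integrableOn_Ioc
  have hintu : (∫ θ in Set.Ioc (0:ℝ) (2*π), (g θ).re) = 2*π*a₀ := by
    have h0 := coeff_int f a hsum ρ h0ρ hρ 0
    simp only [Nat.cast_zero, neg_zero, zero_mul, Complex.exp_zero, mul_one, pow_zero, ha0] at h0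
    have hre' := integral_re hgint
    simp only [RCLike.re_to_complex] at hre'
    rw [hre', h0]
    simp
  have hnorm : ‖(π:ℂ) * (a n * (ρ:ℂ)^n)‖
      ≤ ∫ θ in Set.Ioc (0:ℝ) (2*π), (1 - (g θ).re) := by
    rw [← key]
    refine (norm_integral_le_integral_norm _).trans (le_of_eq ?_)
    refine integral_congr_ae (Filter.Eventually.of_forall fun θ => ?_)
    show ‖(((g θ).re : ℂ) - 1) * Complex.exp (-(n:ℂ) * Complex.I * (θ:ℂ))‖ = 1 - (g θ).re
    rw [norm_mul]
    simp only [Complex.norm_exp]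
    have h1 : (((g θ).re : ℂ) - 1) = (((g θ).re - 1 : ℝ) : ℂ) := by push_cast; ring
    rw [h1, Complex.norm_real, Real.norm_eq_abs, _root_.abs_of_nonpos (by linarith [hgre θ])]
    have h2 : (-(n:ℂ) * Complex.I * (θ:ℝ)).re = 0 := by simp
    rw [h2]
    simp
  have hsub : (∫ θ in Set.Ioc (0:ℝ) (2*π), (1 - (g θ).re)) = 2*π - 2*π*a₀ := by
    have hgre_int : Integrable (fun θ : ℝ => (g θ).re)
        (volume.restrict (Set.Ioc (0:ℝ) (2*π))) := hgint.re
    have hvol : (volume (Set.Ioc (0:ℝ) (2*π))).toReal = 2*π := by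
      rw [Real.volume_Ioc, ENNReal.toReal_ofReal (by nlinarith [Real.pi_pos] : (0:ℝ) ≤ 2*π - 0)]
      ring
    rw [integral_sub (integrableOn_const (C := (1:ℝ)) measure_Ioc_lt_top.ne) hgre_int, hintu,
      setIntegral_const, Measure.real, hvol, smul_eq_mul, mul_one]
  have habs2 : ‖(π:ℂ) * (a n * (ρ:ℂ)^n)‖ = π * (‖a n‖ * ρ^n) := by
    simp [norm_mul, Complex.norm_real, _root_.abs_of_nonneg Real.pi_pos.le,
      _root_.abs_of_nonneg h0ρ]
  rw [habs2, hsub] at hnorm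
  nlinarith [Real.pi_pos]

private lemma coeff_le (f : ℂ → ℂ) (a : ℕ → ℂ) (a₀ : ℝ)
    (hsum : ∀ z ∈ ball (0 : ℂ) 1, HasSum (fun n => a n * z ^ n) (f z))
    (hre : ∀ z ∈ ball (0 : ℂ) 1, (f z).re < 1)
    (ha0 : a 0 = (a₀ : ℂ)) (n : ℕ) (hn : 1 ≤ n) :
    ‖a n‖ ≤ 2*(1-a₀) := by
  have hb : ∀ k : ℕ, ‖a n‖ * (1 - 1/((k:ℝ)+1))^n ≤ 2*(1-a₀) := by
    intro k
    have hk : (0:ℝ) < (k:ℝ) + 1 := by positivity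
    have h0ρ : (0:ℝ) ≤ 1 - 1/((k:ℝ)+1) := by
      have : 1/((k:ℝ)+1) ≤ 1 := by
        rw [div_le_one hk]; linarith [Nat.cast_nonneg (α := ℝ) k]
      linarith
    have hρ : 1 - 1/((k:ℝ)+1) < 1 := by
      have : 0 < 1/((k:ℝ)+1) := by positivity
      linarith
    exact coeff_rho f a a₀ hsum hre ha0 _ h0ρ hρ n hn
  have ht : Filter.Tendsto (fun k : ℕ => ‖a n‖ * (1 - 1/((k:ℝ)+1))^n)
      Filter.atTop (nhds (‖a n‖)) := by
    have t0 : Filter.Tendsto (fun k : ℕ => 1 - 1/((k:ℝ)+1)) Filter.atTop (nhds 1) := by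
      simpa using (tendsto_const_nhds (x := (1:ℝ))).sub
        tendsto_one_div_add_atTop_nhds_zero_nat
    simpa using (t0.pow n).const_mul (‖a n‖)
  exact le_of_tendsto ht (Filter.Eventually.of_forall hb)

set_option maxHeartbeats 1000000 in
/-- If `Re f < 1` and `a₀ = f(0) ∈ [0,1)`, then
`a₀² + ∑_{n≥1} |aₙ| rⁿ ≤ 1` for `r ≤ (1+a₀)/(3+a₀)`. -/
theorem bohr_P_pow_two (f : ℂ → ℂ) (a : ℕ → ℂ) (a₀ : ℝ)
    (hsum : ∀ z ∈ ball (0 : ℂ) 1, HasSum (fun n => a n * z ^ n) (f z))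
    (hre : ∀ z ∈ ball (0 : ℂ) 1, (f z).re < 1)
    (ha0 : a 0 = (a₀ : ℂ)) (h0 : 0 ≤ a₀) (h1 : a₀ < 1)
    (r : ℝ) (hr0 : 0 ≤ r) (hr : r ≤ (1 + a₀) / (3 + a₀)) :
    a₀ ^ 2 + ∑' n : ℕ, ‖a (n + 1)‖ * r ^ (n + 1) ≤ 1 := by
  have hden : (0:ℝ) < 3 + a₀ := by linarith
  have hlt : (1 + a₀) / (3 + a₀) < 1 := by
    rw [div_lt_one hden]; linarith
  have hr1 : r < 1 := lt_of_le_of_lt hr hlt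
  have hsummable : Summable (fun m : ℕ => ‖a m‖ * r^m) := by
    have hz : (r:ℂ) ∈ ball (0:ℂ) 1 := by
      simpa [mem_ball, _root_.abs_of_nonneg hr0] using hr1
    have hn := summable_norm_iff.mpr ((hsum _ hz).summable)
    refine hn.congr fun m => ?_
    simp [_root_.abs_of_nonneg hr0]
  have hS : Summable (fun n : ℕ => ‖a (n+1)‖ * r^(n+1)) :=
    (summable_nat_add_iff 1).mpr hsummable
  have hgeo : Summable (fun n : ℕ => 2*(1-a₀) * r^(n+1)) := by
    refine Summable.congr ((summable_geometric_of_lt_one hr0 hr1).mul_left (2*(1-a₀)*r))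
      fun n => by ring
  have hle : (∑' n : ℕ, ‖a (n+1)‖ * r^(n+1)) ≤ ∑' n : ℕ, 2*(1-a₀) * r^(n+1) := by
    refine Summable.tsum_le_tsum (fun n => ?_) hS hgeo
    exact mul_le_mul_of_nonneg_right
      (coeff_le f a a₀ hsum hre ha0 (n+1) (Nat.succ_le_succ (Nat.zero_le n)))
      (pow_nonneg hr0 _)
  have htsum : (∑' n : ℕ, 2*(1-a₀) * r^(n+1)) = 2*(1-a₀) * (r / (1-r)) := by
    rw [tsum_mul_left]
    congr 1
    have h' : (∑' n : ℕ, r^(n+1)) = r * ∑' n : ℕ, r^n := by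
      rw [← tsum_mul_left]
      exact tsum_congr fun n => by ring
    rw [h', tsum_geometric_of_lt_one hr0 hr1]
    rw [div_eq_mul_inv]
  have h3 : (0:ℝ) < 3 + a₀ := by linarith
  have hr' : r * (3 + a₀) ≤ 1 + a₀ := by
    rw [← le_div_iff₀ h3]; exact hr
  have h1r : (0:ℝ) < 1 - r := by linarith
  have key2 : 2*(1-a₀) * r ≤ (1-a₀^2) * (1-r) := by
    nlinarith [mul_nonneg (by linarith : (0:ℝ) ≤ 1-a₀)
      (by linarith : (0:ℝ) ≤ 1 + a₀ - r*(3+a₀))]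
  have hfinal : 2*(1-a₀) * (r/(1-r)) ≤ 1 - a₀^2 := by
    have e1 : 2*(1-a₀)*(r/(1-r)) = (2*(1-a₀)*r)/(1-r) := by ring
    rw [e1]
    rw [div_le_iff₀ h1r]
    nlinarith [key2]
  rw [htsum] at hle
  linarith [hle.trans hfinal]
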